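/- (Generalized Yoshida lemma) Let q > 1 and κ ≥ 0 be real numbers, and let α, β ∈ ℂ satisfy αβ = q, α + β ∈ ℝ, and |α + β| ≤ q + 1. Then for any w ∈ ℂ: if |w| < 1 then |w − αq^κ|·|w − βq^κ| > |1 − αq^κ w|·|1 − βq^κ w|, and if |w| > 1 then |w − αq^κ|·|w − βq^κ| < |1 − αq^κ w|·|1 − βq^κ w|. -/

import Mathlib

lemma stmt_2_aux_br (σ P x y : ℝ) (hP1 : 1 < P) (hσ1 : -(P + 1) ≤ σ) (hσ2 : σ ≤ P + 1)
    (hn1 : x ^ 2 + y ^ 2 ≠ 1) :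
    2 * σ * x - (P + 1) * ((x ^ 2 + y ^ 2) + 1) < 0 := by
  rcases le_or_gt 0 x with hx0 | hx0
  · have hpos : 0 < (x - 1) ^ 2 + y ^ 2 := by
      rcases eq_or_ne ((x - 1) ^ 2 + y ^ 2) 0 with h | h
      · exfalso
        have hx : x = 1 := by nlinarith [sq_nonneg (x - 1), sq_nonneg y]
        have hy : y = 0 := by nlinarith [sq_nonneg (x - 1), sq_nonneg y]
        exact hn1 (by rw [hx, hy]; ring)
      · exact lt_of_le_of_ne (by positivity) (Ne.symm h)
    nlinarith [mul_nonneg (sub_nonneg.2 hσ2) hx0,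
      mul_pos (show (0:ℝ) < P + 1 by linarith) hpos]
  · have hpos : 0 < (x + 1) ^ 2 + y ^ 2 := by
      rcases eq_or_ne ((x + 1) ^ 2 + y ^ 2) 0 with h | h
      · exfalso
        have hx : x = -1 := by nlinarith [sq_nonneg (x + 1), sq_nonneg y]
        have hy : y = 0 := by nlinarith [sq_nonneg (x + 1), sq_nonneg y]
        exact hn1 (by rw [hx, hy]; ring)
      · exact lt_of_le_of_ne (by positivity) (Ne.symm h)
    nlinarith [mul_nonneg (show (0:ℝ) ≤ P + 1 + σ by linarith)
        (show (0:ℝ) ≤ -x by linarith),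
      mul_pos (show (0:ℝ) < P + 1 by linarith) hpos]

theorem stmt_2 (q κ : ℝ) (hq : 1 < q) (hκ : 0 ≤ κ) (α β : ℂ)
    (hprod : α * β = (q : ℂ)) (hre : (α + β).im = 0)
    (hsum : ‖α + β‖ ≤ q + 1) (w : ℂ) :
    (‖w‖ < 1 →
      ‖w - α * ((q ^ κ : ℝ) : ℂ)‖ * ‖w - β * ((q ^ κ : ℝ) : ℂ)‖ >
        ‖1 - α * ((q ^ κ : ℝ) : ℂ) * w‖ * ‖1 - β * ((q ^ κ : ℝ) : ℂ) * w‖) ∧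
    (‖w‖ > 1 →
      ‖w - α * ((q ^ κ : ℝ) : ℂ)‖ * ‖w - β * ((q ^ κ : ℝ) : ℂ)‖ <
        ‖1 - α * ((q ^ κ : ℝ) : ℂ) * w‖ * ‖1 - β * ((q ^ κ : ℝ) : ℂ) * w‖) := by
  obtain ⟨Q, hQdef⟩ : ∃ Q : ℝ, Q = q ^ κ := ⟨_, rfl⟩
  have hQ1 : 1 ≤ Q := hQdef ▸ Real.one_le_rpow hq.le hκ
  obtain ⟨s, hsdef⟩ : ∃ s : ℝ, s = (α + β).re := ⟨_, rfl⟩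
  have hα : α + β = (s : ℂ) := by
    apply Complex.ext
    · simp [hsdef]
    · simp [hre]
  have hs : |s| ≤ q + 1 := by
    have h : ‖((s : ℂ))‖ ≤ q + 1 := by rw [← hα]; exact hsum
    simpa using h
  obtain ⟨σ, hσdef⟩ : ∃ σ : ℝ, σ = s * Q := ⟨_, rfl⟩
  obtain ⟨P, hPdef⟩ : ∃ P : ℝ, P = q * Q ^ 2 := ⟨_, rfl⟩
  have hQ2 : 1 ≤ Q ^ 2 := by nlinarith
  have hP1 : 1 < P := by rw [hPdef]; nlinarith
  have hσb : |σ| ≤ P + 1 := by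
    rw [hσdef, hPdef, abs_mul, abs_of_nonneg (by linarith : (0:ℝ) ≤ Q)]
    nlinarith [abs_nonneg s, mul_nonneg (by linarith : (0:ℝ) ≤ Q - 1)
      (by nlinarith : (0:ℝ) ≤ q * Q - 1),
      mul_le_mul_of_nonneg_right hs (by linarith : (0:ℝ) ≤ Q)]
  obtain ⟨hσ1, hσ2⟩ := abs_le.mp hσb
  -- product identities
  have h1 : (w - α * ((q ^ κ : ℝ) : ℂ)) * (w - β * ((q ^ κ : ℝ) : ℂ))
      = w * w - (σ : ℂ) * w + (P : ℂ) := by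
    have e : (w - α * ((q ^ κ : ℝ) : ℂ)) * (w - β * ((q ^ κ : ℝ) : ℂ))
        = w * w - (α + β) * ((q ^ κ : ℝ) : ℂ) * w + (α * β) * ((q ^ κ : ℝ) : ℂ) ^ 2 := by
      ring
    rw [e, hα, hprod, hσdef, hPdef, hQdef]; push_cast; ring
  have h2 : (1 - α * ((q ^ κ : ℝ) : ℂ) * w) * (1 - β * ((q ^ κ : ℝ) : ℂ) * w)
      = 1 - (σ : ℂ) * w + (P : ℂ) * (w * w) := by
    have e : (1 - α * ((q ^ κ : ℝ) : ℂ) * w) * (1 - β * ((q ^ κ : ℝ) : ℂ) * w)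
        = 1 - (α + β) * ((q ^ κ : ℝ) : ℂ) * w
          + (α * β) * ((q ^ κ : ℝ) : ℂ) ^ 2 * (w * w) := by ring
    rw [e, hα, hprod, hσdef, hPdef, hQdef]; push_cast; ring
  obtain ⟨X, hXdef⟩ : ∃ X : ℂ, X = w * w - (σ : ℂ) * w + (P : ℂ) := ⟨_, rfl⟩
  obtain ⟨Y, hYdef⟩ : ∃ Y : ℂ, Y = 1 - (σ : ℂ) * w + (P : ℂ) * (w * w) := ⟨_, rfl⟩
  have hL : ‖w - α * ((q ^ κ : ℝ) : ℂ)‖ * ‖w - β * ((q ^ κ : ℝ) : ℂ)‖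
      = ‖X‖ := by rw [← norm_mul, h1, hXdef]
  have hR : ‖1 - α * ((q ^ κ : ℝ) : ℂ) * w‖
        * ‖1 - β * ((q ^ κ : ℝ) : ℂ) * w‖
      = ‖Y‖ := by rw [← norm_mul, h2, hYdef]
  obtain ⟨x, hxdef⟩ : ∃ x : ℝ, x = w.re := ⟨_, rfl⟩
  obtain ⟨y, hydef⟩ : ∃ y : ℝ, y = w.im := ⟨_, rfl⟩
  have hD : Complex.normSq X - Complex.normSq Y
      = (P - 1) * ((x ^ 2 + y ^ 2) - 1)
        * (2 * σ * x - (P + 1) * ((x ^ 2 + y ^ 2) + 1)) := by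
    rw [hXdef, hYdef, hxdef, hydef]
    simp only [Complex.normSq_apply, Complex.add_re, Complex.add_im,
      Complex.sub_re, Complex.sub_im, Complex.mul_re, Complex.mul_im,
      Complex.ofReal_re, Complex.ofReal_im, Complex.one_re, Complex.one_im]
    ring
  have habs2 : ‖w‖ ^ 2 = x ^ 2 + y ^ 2 := by
    rw [Complex.sq_norm, Complex.normSq_apply, hxdef, hydef]; ring
  have hbr : x ^ 2 + y ^ 2 ≠ 1 →
      2 * σ * x - (P + 1) * ((x ^ 2 + y ^ 2) + 1) < 0 :=
    fun hn1 => stmt_2_aux_br σ P x y hP1 hσ1 hσ2 hn1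
  constructor
  · intro hw
    have hn : x ^ 2 + y ^ 2 < 1 := by
      rw [← habs2]; nlinarith [norm_nonneg w]
    have hbr' := hbr (by linarith)
    have hDpos : 0 < Complex.normSq X - Complex.normSq Y := by
      rw [hD]
      exact mul_pos_of_neg_of_neg
        (mul_neg_of_pos_of_neg (by linarith) (by linarith)) hbr'
    rw [hL, hR]
    apply lt_of_pow_lt_pow_left₀ 2 (norm_nonneg X)
    rw [Complex.sq_norm, Complex.sq_norm]; linarith
  · intro hw
    have hn : 1 < x ^ 2 + y ^ 2 := by
      rw [← habs2]; nlinarith [norm_nonneg w]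
    have hbr' := hbr (by linarith)
    have hDneg : Complex.normSq X - Complex.normSq Y < 0 := by
      rw [hD]
      exact mul_neg_of_pos_of_neg
        (mul_pos (by linarith) (by linarith)) hbr'
    rw [hL, hR]
    apply lt_of_pow_lt_pow_left₀ 2 (norm_nonneg Y)
    rw [Complex.sq_norm, Complex.sq_norm]; linarith
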